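/- arXiv:0907.2908 — 2 statements merged into one kernel-verified Lean document; each statement's English description precedes it below -/
import Mathlib

section
/- For fixed 0 < z₋ < z₊ and 0 < α < 1, the integral G_n = ∫₀^{z₋} zⁿ (z₊ − z)^(−α)(z₋ − z)^(α−1) dz satisfies G_n ~ Γ(α) n^(−α) z₋^(α+n) (z₊ − z₋)^(−α) as n → ∞; that is, the ratio G_n · n^α z₋^(−α−n) (z₊ − z₋)^α / Γ(α) tends to 1. -/
open Real Filter MeasureTheory

namespace GAsymp

variable {zm zp α : ℝ}

lemma weight_int (hα0 : 0 < α) :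
    IntervalIntegrable (fun t : ℝ => (1 - t) ^ (α - 1)) volume 0 1 := by
  have h : IntervalIntegrable (fun x : ℝ => x ^ (α - 1)) volume 0 1 :=
    intervalIntegral.intervalIntegrable_rpow' (by linarith)
  simpa using (h.comp_sub_left 1).symm

lemma weight_integral (hα0 : 0 < α) :
    (∫ t in (0:ℝ)..1, (1 - t) ^ (α - 1)) = 1 / α := by
  have h := intervalIntegral.integral_comp_sub_left (a := 0) (b := 1)
    (fun x : ℝ => x ^ (α - 1)) 1
  simp only [sub_zero, sub_self] at h
  rw [h, intervalIntegral.integral_symm, integral_rpow (Or.inl (by linarith))]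
  simp only [sub_add_cancel, Real.one_rpow, Real.zero_rpow (by positivity : α ≠ 0)]
  ring

lemma cmw_int (hα0 : 0 < α) {g : ℝ → ℝ} (hg : ContinuousOn g (Set.uIcc 0 1)) :
    IntervalIntegrable (fun t : ℝ => g t * (1 - t) ^ (α - 1)) volume 0 1 :=
  (weight_int hα0).continuousOn_mul hg

lemma f_contOn (hzm : 0 < zm) (hzz : zm < zp) :
    ContinuousOn (fun t : ℝ => (zp - zm * t) ^ (-α)) (Set.uIcc 0 1) := by
  rw [Set.uIcc_of_le (by norm_num : (0:ℝ) ≤ 1)]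
  apply ContinuousOn.rpow_const (by fun_prop)
  intro t ht
  left
  have h1 : zm * t ≤ zm := by nlinarith [ht.1, ht.2]
  nlinarith

lemma In_int (hzm : 0 < zm) (hzz : zm < zp) (hα0 : 0 < α) (n : ℕ) :
    IntervalIntegrable
      (fun t : ℝ => t ^ n * (zp - zm * t) ^ (-α) * (1 - t) ^ (α - 1)) volume 0 1 :=
  cmw_int hα0 ((continuousOn_pow n).mul (f_contOn hzm hzz))

lemma Bn_int (hα0 : 0 < α) (n : ℕ) :
    IntervalIntegrable (fun t : ℝ => t ^ n * (1 - t) ^ (α - 1)) volume 0 1 :=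
  cmw_int hα0 (continuousOn_pow n)

lemma Bn_eq (hα0 : 0 < α) (n : ℕ) :
    (∫ t in (0:ℝ)..1, t ^ n * (1 - t) ^ (α - 1)) =
      (n.factorial : ℝ) / ∏ j ∈ Finset.range (n + 1), (α + j) := by
  have h1 : Complex.betaIntegral ((n : ℂ) + 1) (α : ℂ)
      = ((∫ t in (0:ℝ)..1, t ^ n * (1 - t) ^ (α - 1) : ℝ) : ℂ) := by
    rw [Complex.betaIntegral, ← intervalIntegral.integral_ofReal]
    apply intervalIntegral.integral_congr
    intro x hx
    rw [Set.uIcc_of_le (by norm_num : (0:ℝ) ≤ 1)] at hx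
    simp only
    rw [add_sub_cancel_right, Complex.cpow_natCast]
    rw [show ((α : ℂ) - 1) = ((α - 1 : ℝ) : ℂ) by push_cast; ring,
      show (1 - (x:ℂ)) = ((1 - x : ℝ) : ℂ) by push_cast; ring,
      ← Complex.ofReal_cpow (by linarith [hx.2] : (0:ℝ) ≤ 1 - x)]
    push_cast
    ring
  have h2 := Complex.betaIntegral_symm (α : ℂ) ((n : ℂ) + 1)
  have h3 := Complex.betaIntegral_eval_nat_add_one_right
    (by simpa using hα0 : 0 < Complex.re (α : ℂ)) n
  have h4 := h1.symm.trans (h2.trans h3)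
  rw [show ((n.factorial : ℂ) / ∏ j ∈ Finset.range (n + 1), ((α : ℂ) + j))
      = (((n.factorial : ℝ) / ∏ j ∈ Finset.range (n + 1), (α + j) : ℝ) : ℂ) by
        push_cast; ring] at h4
  exact_mod_cast h4

lemma Bn_lim (hα0 : 0 < α) :
    Filter.Tendsto (fun n : ℕ => (n : ℝ) ^ α * ∫ t in (0:ℝ)..1, t ^ n * (1 - t) ^ (α - 1))
      atTop (nhds (Real.Gamma α)) := by
  apply (Real.GammaSeq_tendsto_Gamma α).congr
  intro n
  rw [Real.GammaSeq, mul_div_assoc, ← Bn_eq hα0 n]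

lemma decay (hα0 : 0 < α) (hα1 : α < 1) {r : ℝ} (hr0 : 0 ≤ r) (hr1 : r < 1) :
    Filter.Tendsto (fun n : ℕ => (n : ℝ) ^ α * r ^ n) atTop (nhds 0) := by
  apply squeeze_zero (g := fun n : ℕ => (n : ℝ) * r ^ n)
  · intro n; positivity
  · intro n
    rcases Nat.eq_zero_or_pos n with h | h
    · subst h; simp [Real.zero_rpow hα0.ne']
    · have h1 : (1:ℝ) ≤ n := by exact_mod_cast h
      have h2 : (n : ℝ) ^ α ≤ (n : ℝ) ^ (1:ℝ) :=
        Real.rpow_le_rpow_of_exponent_le h1 (by linarith)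
      rw [Real.rpow_one] at h2
      have hrn : (0:ℝ) ≤ r ^ n := by positivity
      nlinarith
  · exact tendsto_self_mul_const_pow_of_lt_one hr0 hr1

lemma estimate (hzm : 0 < zm) (hzz : zm < zp) (hα0 : 0 < α)
    {δ ε' : ℝ} (hδ0 : 0 < δ) (hδ1 : δ < 1) (hε' : 0 ≤ ε')
    (hδf : ∀ t ∈ Set.Icc (1 - δ) (1:ℝ),
      (zp - zm) ^ (-α) - (zp - zm * t) ^ (-α) ≤ ε') (n : ℕ) :
    0 ≤ (zp - zm) ^ (-α) * (∫ t in (0:ℝ)..1, t ^ n * (1 - t) ^ (α - 1))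
        - (∫ t in (0:ℝ)..1, t ^ n * (zp - zm * t) ^ (-α) * (1 - t) ^ (α - 1)) ∧
      (zp - zm) ^ (-α) * (∫ t in (0:ℝ)..1, t ^ n * (1 - t) ^ (α - 1))
        - (∫ t in (0:ℝ)..1, t ^ n * (zp - zm * t) ^ (-α) * (1 - t) ^ (α - 1))
      ≤ ε' * (∫ t in (0:ℝ)..1, t ^ n * (1 - t) ^ (α - 1))
        + (zp - zm) ^ (-α) * (1 - δ) ^ n * (1 / α) := by
  set c : ℝ := (zp - zm) ^ (-α) with hc
  have hc0 : 0 < c := Real.rpow_pos_of_pos (by linarith) _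
  have hfle : ∀ t ∈ Set.Icc (0:ℝ) 1, (zp - zm * t) ^ (-α) ≤ c := by
    intro t ht
    exact Real.rpow_le_rpow_of_nonpos (by linarith) (by nlinarith [ht.1, ht.2])
      (by linarith)
  have hfpos : ∀ t ∈ Set.Icc (0:ℝ) 1, 0 < (zp - zm * t) ^ (-α) := by
    intro t ht
    exact Real.rpow_pos_of_pos (by nlinarith [ht.1, ht.2]) _
  have hwnn : ∀ t ∈ Set.Icc (0:ℝ) 1, 0 ≤ (1 - t) ^ (α - 1) := by
    intro t ht
    exact Real.rpow_nonneg (by linarith [ht.2]) _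
  have hmono1 : (∫ t in (0:ℝ)..1, t ^ n * (zp - zm * t) ^ (-α) * (1 - t) ^ (α - 1))
      ≤ ∫ t in (0:ℝ)..1, c * (t ^ n * (1 - t) ^ (α - 1)) := by
    apply intervalIntegral.integral_mono_on (by norm_num)
      (In_int hzm hzz hα0 n) ((Bn_int hα0 n).const_mul c)
    intro t ht
    have h1 := hfle t ht
    have h2 := hwnn t ht
    have h3 : (0:ℝ) ≤ t ^ n := pow_nonneg ht.1 n
    nlinarith [mul_nonneg h3 h2]
  rw [intervalIntegral.integral_const_mul] at hmono1
  constructor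
  · linarith
  have hmono2 :
      (∫ t in (0:ℝ)..1, (c * (t ^ n * (1 - t) ^ (α - 1))
          - t ^ n * (zp - zm * t) ^ (-α) * (1 - t) ^ (α - 1)))
      ≤ ∫ t in (0:ℝ)..1, (ε' * (t ^ n * (1 - t) ^ (α - 1))
          + (c * (1 - δ) ^ n) * (1 - t) ^ (α - 1)) := by
    apply intervalIntegral.integral_mono_on (by norm_num)
      (((Bn_int hα0 n).const_mul c).sub (In_int hzm hzz hα0 n))
      (((Bn_int hα0 n).const_mul ε').add ((weight_int hα0).const_mul (c * (1 - δ) ^ n)))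
    intro t ht
    have h2 := hwnn t ht
    have h3 : (0:ℝ) ≤ t ^ n := pow_nonneg ht.1 n
    have h4 : t ^ n ≤ 1 := pow_le_one₀ ht.1 ht.2
    have h5 := hfle t ht
    have h6 := hfpos t ht
    rcases le_or_gt (1 - δ) t with h | h
    · have h7 : c - (zp - zm * t) ^ (-α) ≤ ε' := hδf t ⟨h, ht.2⟩
      have h8 : (0:ℝ) ≤ (1 - δ) ^ n := pow_nonneg (by linarith) n
      nlinarith [mul_nonneg h3 h2, mul_nonneg (mul_nonneg hc0.le h8) h2,
        mul_le_mul_of_nonneg_left h7 (mul_nonneg h3 h2)]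
    · have h9 : t ^ n ≤ (1 - δ) ^ n := pow_le_pow_left₀ ht.1 h.le n
      have h10 : t ^ n * (c - (zp - zm * t) ^ (-α)) ≤ (1 - δ) ^ n * c := by
        apply mul_le_mul h9 (by linarith) (by linarith) (pow_nonneg (by linarith) n)
      have h11 := mul_le_mul_of_nonneg_right h10 h2
      have h12 : 0 ≤ ε' * (t ^ n * (1 - t) ^ (α - 1)) := by positivity
      nlinarith
  rw [intervalIntegral.integral_sub ((Bn_int hα0 n).const_mul c) (In_int hzm hzz hα0 n),
    intervalIntegral.integral_add ((Bn_int hα0 n).const_mul ε')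
      ((weight_int hα0).const_mul (c * (1 - δ) ^ n)),
    intervalIntegral.integral_const_mul, intervalIntegral.integral_const_mul,
    intervalIntegral.integral_const_mul, weight_integral hα0] at hmono2
  linarith

lemma main_lim (hzm : 0 < zm) (hzz : zm < zp) (hα0 : 0 < α) (hα1 : α < 1) :
    Filter.Tendsto
      (fun n : ℕ => (n : ℝ) ^ α *
        ∫ t in (0:ℝ)..1, t ^ n * (zp - zm * t) ^ (-α) * (1 - t) ^ (α - 1))
      atTop (nhds (Real.Gamma α * (zp - zm) ^ (-α))) := by
  have hc0 : (0:ℝ) < (zp - zm) ^ (-α) := Real.rpow_pos_of_pos (by linarith) _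
  have hΓ : 0 < Real.Gamma α := Real.Gamma_pos_of_pos hα0
  rw [Metric.tendsto_nhds]
  intro ε hε
  set ε' : ℝ := ε / (3 * (Real.Gamma α + 1)) with hε'def
  have hε'pos : 0 < ε' := by positivity
  have hcont : ContinuousAt (fun t : ℝ => (zp - zm * t) ^ (-α)) 1 := by
    apply ContinuousAt.rpow_const (by fun_prop)
    left; simp only [mul_one]; exact ne_of_gt (by linarith)
  obtain ⟨δ, hδpos, hδ⟩ := Metric.continuousAt_iff.mp hcont ε' hε'pos
  set δ' : ℝ := min (δ / 2) (1 / 2) with hδ'def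
  have hδ'0 : 0 < δ' := by positivity
  have hδ'1 : δ' < 1 := lt_of_le_of_lt (min_le_right _ _) (by norm_num)
  have hδf : ∀ t ∈ Set.Icc (1 - δ') (1:ℝ),
      (zp - zm) ^ (-α) - (zp - zm * t) ^ (-α) ≤ ε' := by
    intro t ht
    have hd2 : δ' ≤ δ / 2 := min_le_left _ _
    have h1 : dist t 1 < δ := by
      rw [Real.dist_eq, abs_lt]
      constructor
      · linarith [ht.1]
      · linarith [ht.2]
    have h2 := hδ h1
    rw [Real.dist_eq] at h2
    simp only [mul_one] at h2
    have h3 := abs_lt.mp h2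
    linarith [h3.1]
  have hest := fun n => estimate hzm hzz hα0 hδ'0 hδ'1 hε'pos.le hδf n
  have E1 : ∀ᶠ n : ℕ in atTop,
      (n:ℝ) ^ α * (∫ t in (0:ℝ)..1, t ^ n * (1 - t) ^ (α - 1)) < Real.Gamma α + 1 :=
    (Bn_lim hα0).eventually_lt_const (by linarith)
  have E2 : ∀ᶠ n : ℕ in atTop,
      (zp - zm) ^ (-α) *
        |(n:ℝ) ^ α * (∫ t in (0:ℝ)..1, t ^ n * (1 - t) ^ (α - 1)) - Real.Gamma α|
        < ε / 3 := by
    have h := (((Bn_lim hα0).sub_const (Real.Gamma α)).abs).const_mul ((zp - zm) ^ (-α))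
    simp only [sub_self, abs_zero, mul_zero] at h
    exact h.eventually_lt_const (by linarith)
  have E3 : ∀ᶠ n : ℕ in atTop,
      ((zp - zm) ^ (-α) * (1/α)) * ((n:ℝ) ^ α * (1 - δ') ^ n) < ε / 3 := by
    have h := (decay hα0 hα1 (by linarith : (0:ℝ) ≤ 1 - δ')
      (by linarith)).const_mul ((zp - zm) ^ (-α) * (1/α))
    rw [mul_zero] at h
    exact h.eventually_lt_const (by linarith)
  filter_upwards [E1, E2, E3] with n h1 h2 h3
  rw [Real.dist_eq]
  set c : ℝ := (zp - zm) ^ (-α)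
  set A : ℝ := (n:ℝ) ^ α with hA
  have hA0 : 0 ≤ A := Real.rpow_nonneg (Nat.cast_nonneg n) α
  set B := (∫ t in (0:ℝ)..1, t ^ n * (1 - t) ^ (α - 1)) with hB
  set I := (∫ t in (0:ℝ)..1, t ^ n * (zp - zm * t) ^ (-α) * (1 - t) ^ (α - 1)) with hI
  obtain ⟨e1, e2⟩ := hest n
  have key : |A * I - Real.Gamma α * c| ≤ A * (c * B - I) + c * |A * B - Real.Gamma α| := by
    have hrw : A * I - Real.Gamma α * c = c * (A * B - Real.Gamma α) - A * (c * B - I) := by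
      ring
    rw [hrw]
    calc |c * (A * B - Real.Gamma α) - A * (c * B - I)|
        ≤ |c * (A * B - Real.Gamma α)| + |A * (c * B - I)| := abs_sub _ _
      _ = c * |A * B - Real.Gamma α| + A * (c * B - I) := by
          rw [abs_mul, abs_of_pos hc0, abs_of_nonneg (mul_nonneg hA0 e1)]
      _ = A * (c * B - I) + c * |A * B - Real.Gamma α| := by ring
  have h4 : A * (c * B - I) ≤ ε' * (A * B) + (c * (1/α)) * (A * (1 - δ') ^ n) := by
    calc A * (c * B - I) ≤ A * (ε' * B + c * (1 - δ') ^ n * (1 / α)) :=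
          mul_le_mul_of_nonneg_left e2 hA0
      _ = ε' * (A * B) + (c * (1/α)) * (A * (1 - δ') ^ n) := by ring
  have h5 : ε' * (A * B) ≤ ε' * (Real.Gamma α + 1) :=
    mul_le_mul_of_nonneg_left h1.le hε'pos.le
  have h6 : ε' * (Real.Gamma α + 1) = ε / 3 := by
    rw [hε'def]
    have hne : Real.Gamma α + 1 ≠ 0 := by positivity
    field_simp
  linarith [key, h4, h5, h2, h3]

lemma cov (hzm : 0 < zm) (hzz : zm < zp) (n : ℕ) :
    (∫ z in (0:ℝ)..zm, z ^ n * (zp - z) ^ (-α) * (zm - z) ^ (α - 1))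
      = zm ^ (α + (n:ℝ)) *
        ∫ t in (0:ℝ)..1, t ^ n * (zp - zm * t) ^ (-α) * (1 - t) ^ (α - 1) := by
  have h := intervalIntegral.integral_comp_mul_left (a := 0) (b := 1)
    (fun z : ℝ => z ^ n * (zp - z) ^ (-α) * (zm - z) ^ (α - 1)) hzm.ne'
  simp only [mul_zero, mul_one, smul_eq_mul] at h
  have h2 : (∫ t in (0:ℝ)..1, (zm * t) ^ n * (zp - zm * t) ^ (-α) * (zm - zm * t) ^ (α - 1))
      = (zm ^ n * zm ^ (α - 1)) *
        ∫ t in (0:ℝ)..1, t ^ n * (zp - zm * t) ^ (-α) * (1 - t) ^ (α - 1) := by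
    rw [← intervalIntegral.integral_const_mul]
    apply intervalIntegral.integral_congr
    intro t ht
    rw [Set.uIcc_of_le (by norm_num : (0:ℝ) ≤ 1)] at ht
    simp only
    rw [show zm - zm * t = zm * (1 - t) by ring,
      Real.mul_rpow hzm.le (by linarith [ht.2] : (0:ℝ) ≤ 1 - t), mul_pow]
    ring
  rw [h2] at h
  have hzm' : zm ^ (α + (n:ℝ)) = zm * (zm ^ n * zm ^ (α - 1)) := by
    rw [Real.rpow_add hzm, Real.rpow_natCast, Real.rpow_sub hzm, Real.rpow_one]
    field_simp
  rw [hzm', mul_assoc, h]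
  field_simp

end GAsymp

/-- Watson's lemma asymptotics: G_n ~ Γ(α) n^(−α) z₋^(α+n) (z₊ − z₋)^(−α) as n → ∞,
for fixed 0 < z₋ < z₊ and 0 < α < 1. -/
theorem G_asymptotics (zm zp α : ℝ) (hzm : 0 < zm) (hzz : zm < zp)
    (hα0 : 0 < α) (hα1 : α < 1) :
    Filter.Tendsto
      (fun n : ℕ =>
        (∫ z in (0:ℝ)..zm, z^n * (zp - z) ^ (-α) * (zm - z) ^ (α - 1))
          / (Real.Gamma α * (n:ℝ) ^ (-α) * zm ^ (α + (n:ℝ)) * (zp - zm) ^ (-α)))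
      Filter.atTop (nhds 1) := by
  have hc0 : (0:ℝ) < (zp - zm) ^ (-α) := Real.rpow_pos_of_pos (by linarith) _
  have hΓ : 0 < Real.Gamma α := Real.Gamma_pos_of_pos hα0
  have hlim := (GAsymp.main_lim hzm hzz hα0 hα1).div_const (Real.Gamma α * (zp - zm) ^ (-α))
  rw [div_self (by positivity : Real.Gamma α * (zp - zm) ^ (-α) ≠ 0)] at hlim
  apply Filter.Tendsto.congr' _ hlim
  rw [Filter.EventuallyEq, eventually_atTop]
  refine ⟨1, fun n hn => ?_⟩
  have hn0 : (0:ℝ) < (n:ℝ) := by exact_mod_cast hn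
  rw [GAsymp.cov hzm hzz n, Real.rpow_neg hn0.le]
  have h1 : (0:ℝ) < (n:ℝ) ^ α := Real.rpow_pos_of_pos hn0 α
  have h2 : (0:ℝ) < zm ^ (α + (n:ℝ)) := Real.rpow_pos_of_pos hzm _
  have ha := h1.ne'
  have hb := h2.ne'
  have hcne := hc0.ne'
  have hΓne := hΓ.ne'
  field_simp
end

section
/- For fixed 0 < z₋ < z₊ and 0 < α < 1, the integral H_n = (sin(απ)/π) ∫_{z₋}^{z₊} ξⁿ (ξ − z₋)^(α−1) (z₊ − ξ)^(−α) dξ satisfies H_n ~ n^(α−1) z₊^(n+1−α) (z₊ − z₋)^(α−1) / Γ(α) as n → ∞. -/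
open Real Filter MeasureTheory intervalIntegral Set Topology

/-- Integrability of the two-sided singular weight. -/
lemma intInt_singular {a b p q : ℝ} (hab : a < b) (hp : -1 < p) (hq : -1 < q) :
    IntervalIntegrable (fun x => (x - a) ^ p * (b - x) ^ q) volume a b := by
  set m := (a + b) / 2 with hm
  have ham : a < m := by rw [hm]; linarith
  have hmb : m < b := by rw [hm]; linarith
  have h1 : IntervalIntegrable (fun x => (x - a) ^ p * (b - x) ^ q) volume a m := by
    have hf : IntervalIntegrable (fun x : ℝ => (x - a) ^ p) volume a m := by
      simpa using (intervalIntegrable_rpow' (a := a - a) (b := m - a) hp).comp_sub_right a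
    apply hf.mul_continuousOn
    apply ContinuousOn.rpow_const (by fun_prop)
    intro x hx
    rw [Set.uIcc_of_le ham.le] at hx
    exact Or.inl (by have := hx.2; intro h; nlinarith)
  have h2 : IntervalIntegrable (fun x => (x - a) ^ p * (b - x) ^ q) volume m b := by
    have hf : IntervalIntegrable (fun x : ℝ => (b - x) ^ q) volume m b := by
      simpa using (intervalIntegrable_rpow' (a := b - m) (b := b - b) hq).comp_sub_left b
    apply hf.continuousOn_mul
    apply ContinuousOn.rpow_const (by fun_prop)
    intro x hx
    rw [Set.uIcc_of_le hmb.le] at hx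
    exact Or.inl (by have := hx.1; intro h; nlinarith)
  exact h1.trans h2

noncomputable def Bfun (α : ℝ) (n : ℕ) : ℝ := ∫ t in (0:ℝ)..1, t ^ n * (1 - t) ^ (-α)

lemma Bfun_integrable {α : ℝ} (hα1 : α < 1) (n : ℕ) :
    IntervalIntegrable (fun t : ℝ => t ^ n * (1 - t) ^ (-α)) volume 0 1 := by
  have hf : IntervalIntegrable (fun t : ℝ => (1 - t) ^ (-α)) volume 0 1 := by
    simpa using (intervalIntegrable_rpow' (r := -α) (by linarith) (a := (1:ℝ)) (b := 0)).comp_sub_left 1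
  exact hf.continuousOn_mul (continuous_pow n).continuousOn

lemma Bfun_pos {α : ℝ} (hα1 : α < 1) (n : ℕ) : 0 < Bfun α n := by
  apply intervalIntegral_pos_of_pos_on (Bfun_integrable hα1 n) _ one_pos
  intro x hx
  have h1 : 0 < x := hx.1
  have h2 : 0 < 1 - x := by have := hx.2; linarith
  positivity

/-- `Bfun α n` equals the mirrored integral. -/
lemma Bfun_eq_mirror {α : ℝ} (n : ℕ) :
    Bfun α n = ∫ x in (0:ℝ)..1, x ^ (-α) * (1 - x) ^ n := by
  have := intervalIntegral.integral_comp_sub_left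
    (f := fun t : ℝ => t ^ n * (1 - t) ^ (-α)) (a := (0:ℝ)) (b := 1) 1
  simp only [sub_zero, sub_self] at this
  rw [Bfun, ← this]
  apply intervalIntegral.integral_congr
  intro x _
  simp only [sub_sub_cancel]
  ring

lemma Bfun_tendsto {α : ℝ} (hα0 : 0 < α) (hα1 : α < 1) :
    Tendsto (fun n : ℕ => (n : ℝ) ^ (1 - α) * Bfun α n) atTop (𝓝 (Real.Gamma (1 - α))) := by
  set s : ℂ := ((1 - α : ℝ) : ℂ) with hs
  have hsre : 0 < s.re := by simp [hs]; linarith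
  have hbeta : ∀ n : ℕ, Complex.betaIntegral s (n + 1) = ((Bfun α n : ℝ) : ℂ) := by
    intro n
    rw [Bfun_eq_mirror, ← intervalIntegral.integral_ofReal]
    apply intervalIntegral.integral_congr
    intro x hx
    rw [Set.uIcc_of_le (by norm_num : (0:ℝ) ≤ 1)] at hx
    push_cast
    rw [Complex.ofReal_cpow hx.1]
    have h1 : ((1:ℂ) - x) ^ ((n:ℂ) + 1 - 1) = ((1:ℂ) - x) ^ (n : ℕ) := by
      rw [add_sub_cancel_right, Complex.cpow_natCast]
    rw [h1]
    push_cast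
    congr 2
    push_cast [hs]
    ring
  have hgs : ∀ n : ℕ, Complex.GammaSeq s n = (((n:ℝ) ^ (1 - α) * Bfun α n : ℝ) : ℂ) := by
    intro n
    rw [Complex.GammaSeq_eq_betaIntegral_of_re_pos hsre, hbeta,
      Complex.ofReal_mul, Complex.ofReal_cpow (Nat.cast_nonneg n)]
    push_cast [hs]
    ring
  have h := Complex.GammaSeq_tendsto_Gamma s
  have h2 : Tendsto (fun n : ℕ => (Complex.GammaSeq s n).re) atTop (𝓝 (Complex.Gamma s).re) :=
    (Complex.continuous_re.tendsto _).comp h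
  have h3 : (Complex.Gamma s).re = Real.Gamma (1 - α) := by
    rw [hs, Complex.Gamma_ofReal, Complex.ofReal_re]
  rw [h3] at h2
  apply h2.congr
  intro n
  rw [hgs]
  simp

lemma J_eq {zp α : ℝ} (hzp : 0 < zp) (n : ℕ) :
    (∫ ξ in (0:ℝ)..zp, ξ ^ n * (zp - ξ) ^ (-α)) = zp ^ ((n:ℝ) + 1 - α) * Bfun α n := by
  have h := intervalIntegral.smul_integral_comp_mul_left
    (f := fun ξ : ℝ => ξ ^ n * (zp - ξ) ^ (-α)) (a := (0:ℝ)) (b := 1) zp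
  simp only [mul_zero, mul_one] at h
  rw [← h]
  have hcong : ∀ x ∈ Set.uIcc (0:ℝ) 1,
      (zp * x) ^ n * (zp - zp * x) ^ (-α) = (zp ^ n * zp ^ (-α)) * (x ^ n * (1 - x) ^ (-α)) := by
    intro x hx
    rw [Set.uIcc_of_le zero_le_one] at hx
    rw [mul_pow, show zp - zp * x = zp * (1 - x) by ring,
      Real.mul_rpow hzp.le (by linarith [hx.2])]
    ring
  rw [intervalIntegral.integral_congr hcong, intervalIntegral.integral_const_mul, smul_eq_mul]
  rw [show (n:ℝ) + 1 - α = ((n:ℝ) + 1) + (-α) by ring, Real.rpow_add hzp,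
    show ((n:ℝ) + 1) = ((n + 1 : ℕ) : ℝ) by push_cast; ring, Real.rpow_natCast]
  rw [Bfun]
  ring

lemma rn_div_J {zp α : ℝ} (hzp : 0 < zp) (hα0 : 0 < α) (hα1 : α < 1)
    {r : ℝ} (hr0 : 0 < r) (hrzp : r < zp) :
    Tendsto (fun n : ℕ => r ^ n / (zp ^ ((n:ℝ) + 1 - α) * Bfun α n)) atTop (𝓝 0) := by
  have hΓ1α : 0 < Real.Gamma (1 - α) := Real.Gamma_pos_of_pos (by linarith)
  have hq0 : 0 < r / zp := by positivity
  have hq1 : r / zp < 1 := (div_lt_one hzp).2 hrzp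
  have t0 : Tendsto (fun n : ℕ => (n : ℝ) * (r / zp) ^ n) atTop (𝓝 0) := by
    have h1 : (1:ℝ) < (r / zp)⁻¹ := one_lt_inv₀ hq0 |>.2 hq1
    have h2 := tendsto_pow_const_div_const_pow_of_one_lt 1 h1
    apply h2.congr
    intro n
    rw [pow_one, inv_pow, div_inv_eq_mul]
  have t1 : Tendsto (fun n : ℕ => (r / zp) ^ n * (n : ℝ) ^ (1 - α)) atTop (𝓝 0) := by
    apply squeeze_zero' (Eventually.of_forall fun n => by positivity) _ t0
    filter_upwards [eventually_ge_atTop 1] with n hn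
    have h1n : (1:ℝ) ≤ (n : ℝ) := by exact_mod_cast hn
    calc (r / zp) ^ n * (n : ℝ) ^ (1 - α)
        ≤ (r / zp) ^ n * (n : ℝ) ^ (1:ℝ) :=
          mul_le_mul_of_nonneg_left
            (Real.rpow_le_rpow_of_exponent_le h1n (by linarith)) (by positivity)
      _ = (n : ℝ) * (r / zp) ^ n := by rw [Real.rpow_one]; ring
  have t3 : Tendsto (fun n : ℕ => zp ^ (α - 1) / ((n : ℝ) ^ (1 - α) * Bfun α n)) atTop
      (𝓝 (zp ^ (α - 1) / Real.Gamma (1 - α))) :=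
    tendsto_const_nhds.div (Bfun_tendsto hα0 hα1) (ne_of_gt hΓ1α)
  have t2 := t1.mul t3
  rw [zero_mul] at t2
  apply t2.congr'
  filter_upwards [eventually_ge_atTop 1] with n hn
  have hn0 : (0:ℝ) < (n : ℝ) := by exact_mod_cast Nat.lt_of_lt_of_le Nat.zero_lt_one hn
  have hnpow : (0:ℝ) < (n : ℝ) ^ (1 - α) := rpow_pos_of_pos hn0 _
  have hBp : 0 < Bfun α n := Bfun_pos hα1 n
  have hzpn : zp ^ ((n:ℝ) + 1 - α) = zp ^ n * zp ^ (1 - α) := by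
    rw [show (n:ℝ) + 1 - α = (n:ℝ) + (1 - α) by ring, Real.rpow_add hzp, Real.rpow_natCast]
  have hzpa : zp ^ (α - 1) = (zp ^ ((1:ℝ) - α))⁻¹ := by
    rw [show α - 1 = -(1 - α) by ring, Real.rpow_neg hzp.le]
  have hzp1α : (0:ℝ) < zp ^ ((1:ℝ) - α) := rpow_pos_of_pos hzp _
  rw [hzpn, hzpa]
  field_simp
  ring_nf
  rw [mul_assoc, ← mul_pow, mul_inv_cancel₀ hzp.ne', one_pow, mul_one]

section Bounds

variable {zm zp α δ : ℝ} (hzm : 0 < zm) (hzz : zm < zp) (hα0 : 0 < α) (hα1 : α < 1)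
  (hδ0 : 0 < δ) (hδc : δ < zp - zm)

/-- Integrability of weight on `[zm, zp]`. -/
lemma hg_int (hzz : zm < zp) (hα0 : 0 < α) (hα1 : α < 1) :
    IntervalIntegrable (fun ξ => (ξ - zm) ^ (α - 1) * (zp - ξ) ^ (-α)) volume zm zp :=
  intInt_singular hzz (by linarith) (by linarith)

lemma hq_int (hzp : 0 < zp) (hα1 : α < 1) :
    IntervalIntegrable (fun ξ => (zp - ξ) ^ (-α)) volume 0 zp := by
  simpa using (intervalIntegrable_rpow' (r := -α) (by linarith)
    (a := zp) (b := 0)).comp_sub_left zp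

include hzm hzz hα0 hα1 hδ0 hδc in
lemma I_upper (n : ℕ) :
    (∫ ξ in zm..zp, ξ ^ n * ((ξ - zm) ^ (α - 1) * (zp - ξ) ^ (-α)))
      ≤ (zp - δ) ^ n * (∫ ξ in zm..zp, (ξ - zm) ^ (α - 1) * (zp - ξ) ^ (-α))
        + (zp - zm - δ) ^ (α - 1) * (zp ^ ((n:ℝ) + 1 - α) * Bfun α n) := by
  have hzp : 0 < zp := hzm.trans hzz
  set r := zp - δ with hrdef
  have hrzm : zm < r := by rw [hrdef]; linarith
  have hrzp : r < zp := by rw [hrdef]; linarith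
  have hr0 : 0 < r := hzm.trans hrzm
  have hg := hg_int hzz hα0 hα1
  have hsub1 : Set.uIcc zm r ⊆ Set.uIcc zm zp := by
    rw [Set.uIcc_of_le hrzm.le, Set.uIcc_of_le hzz.le]
    exact Set.Icc_subset_Icc le_rfl hrzp.le
  have hsub2 : Set.uIcc r zp ⊆ Set.uIcc zm zp := by
    rw [Set.uIcc_of_le hrzp.le, Set.uIcc_of_le hzz.le]
    exact Set.Icc_subset_Icc hrzm.le le_rfl
  have hfg : ∀ a b : ℝ, Set.uIcc a b ⊆ Set.uIcc zm zp →
      IntervalIntegrable (fun ξ => ξ ^ n * ((ξ - zm) ^ (α - 1) * (zp - ξ) ^ (-α))) volume a b :=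
    fun a b h => (hg.mono_set h).continuousOn_mul (continuous_pow n).continuousOn
  have hq := hq_int hzp hα1
  have hqn : IntervalIntegrable (fun ξ => ξ ^ n * (zp - ξ) ^ (-α)) volume 0 zp :=
    hq.continuousOn_mul (continuous_pow n).continuousOn
  have hsubq : Set.uIcc r zp ⊆ Set.uIcc 0 zp := by
    rw [Set.uIcc_of_le hrzp.le, Set.uIcc_of_le hzp.le]
    exact Set.Icc_subset_Icc hr0.le le_rfl
  have hsplit := integral_add_adjacent_intervals (hfg zm r hsub1) (hfg r zp hsub2)
  -- S1 bound
  have hS1 : (∫ ξ in zm..r, ξ ^ n * ((ξ - zm) ^ (α - 1) * (zp - ξ) ^ (-α)))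
      ≤ r ^ n * (∫ ξ in zm..zp, (ξ - zm) ^ (α - 1) * (zp - ξ) ^ (-α)) := by
    have step1 : (∫ ξ in zm..r, ξ ^ n * ((ξ - zm) ^ (α - 1) * (zp - ξ) ^ (-α)))
        ≤ ∫ ξ in zm..r, r ^ n * ((ξ - zm) ^ (α - 1) * (zp - ξ) ^ (-α)) := by
      apply integral_mono_on hrzm.le (hfg zm r hsub1) ((hg.mono_set hsub1).const_mul _)
      intro x hx
      have hgnn : 0 ≤ (x - zm) ^ (α - 1) * (zp - x) ^ (-α) :=
        mul_nonneg (Real.rpow_nonneg (by linarith [hx.1]) _)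
          (Real.rpow_nonneg (by linarith [hx.2, hrzp]) _)
      exact mul_le_mul_of_nonneg_right
        (pow_le_pow_left₀ (by linarith [hx.1]) hx.2 n) hgnn
    rw [intervalIntegral.integral_const_mul] at step1
    refine step1.trans (mul_le_mul_of_nonneg_left ?_ (by positivity))
    apply integral_mono_interval le_rfl hrzm.le hrzp.le ?_ hg
    apply ae_restrict_of_forall_mem measurableSet_Ioc
    intro x hx
    exact mul_nonneg (Real.rpow_nonneg (by linarith [hx.1]) _)
      (Real.rpow_nonneg (by linarith [hx.2]) _)
  -- S2 bound
  have hS2 : (∫ ξ in r..zp, ξ ^ n * ((ξ - zm) ^ (α - 1) * (zp - ξ) ^ (-α)))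
      ≤ (zp - zm - δ) ^ (α - 1) * (zp ^ ((n:ℝ) + 1 - α) * Bfun α n) := by
    have step1 : (∫ ξ in r..zp, ξ ^ n * ((ξ - zm) ^ (α - 1) * (zp - ξ) ^ (-α)))
        ≤ ∫ ξ in r..zp, (zp - zm - δ) ^ (α - 1) * (ξ ^ n * (zp - ξ) ^ (-α)) := by
      apply integral_mono_on hrzp.le (hfg r zp hsub2) ((hqn.mono_set hsubq).const_mul _)
      intro x hx
      have h1 : (x - zm) ^ (α - 1) ≤ (zp - zm - δ) ^ (α - 1) := by
        apply Real.rpow_le_rpow_of_nonpos (by linarith) (by linarith [hx.1]) (by linarith)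
      calc x ^ n * ((x - zm) ^ (α - 1) * (zp - x) ^ (-α))
          = (x - zm) ^ (α - 1) * (x ^ n * (zp - x) ^ (-α)) := by ring
        _ ≤ (zp - zm - δ) ^ (α - 1) * (x ^ n * (zp - x) ^ (-α)) :=
            mul_le_mul_of_nonneg_right h1
              (mul_nonneg (pow_nonneg (by linarith [hx.1]) n)
                (Real.rpow_nonneg (by linarith [hx.2]) _))
    rw [intervalIntegral.integral_const_mul] at step1
    refine step1.trans (mul_le_mul_of_nonneg_left ?_ (Real.rpow_nonneg (by linarith) _))
    rw [← J_eq hzp n]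
    apply integral_mono_interval hr0.le hrzp.le le_rfl ?_ hqn
    apply ae_restrict_of_forall_mem measurableSet_Ioc
    intro x hx
    exact mul_nonneg (pow_nonneg hx.1.le n) (Real.rpow_nonneg (by linarith [hx.2]) _)
  linarith [hsplit, hS1, hS2]

include hzm hzz hα0 hα1 hδ0 hδc in
lemma I_lower (n : ℕ) :
    (zp - zm) ^ (α - 1) * (zp ^ ((n:ℝ) + 1 - α) * Bfun α n
        - (zp - δ) ^ n * (∫ ξ in (0:ℝ)..zp, (zp - ξ) ^ (-α)))
      ≤ ∫ ξ in zm..zp, ξ ^ n * ((ξ - zm) ^ (α - 1) * (zp - ξ) ^ (-α)) := by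
  have hzp : 0 < zp := hzm.trans hzz
  set r := zp - δ with hrdef
  have hrzm : zm < r := by rw [hrdef]; linarith
  have hrzp : r < zp := by rw [hrdef]; linarith
  have hr0 : 0 < r := hzm.trans hrzm
  have hg := hg_int hzz hα0 hα1
  have hsub1 : Set.uIcc zm r ⊆ Set.uIcc zm zp := by
    rw [Set.uIcc_of_le hrzm.le, Set.uIcc_of_le hzz.le]
    exact Set.Icc_subset_Icc le_rfl hrzp.le
  have hsub2 : Set.uIcc r zp ⊆ Set.uIcc zm zp := by
    rw [Set.uIcc_of_le hrzp.le, Set.uIcc_of_le hzz.le]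
    exact Set.Icc_subset_Icc hrzm.le le_rfl
  have hfg : ∀ a b : ℝ, Set.uIcc a b ⊆ Set.uIcc zm zp →
      IntervalIntegrable (fun ξ => ξ ^ n * ((ξ - zm) ^ (α - 1) * (zp - ξ) ^ (-α))) volume a b :=
    fun a b h => (hg.mono_set h).continuousOn_mul (continuous_pow n).continuousOn
  have hq := hq_int hzp hα1
  have hqn : IntervalIntegrable (fun ξ => ξ ^ n * (zp - ξ) ^ (-α)) volume 0 zp :=
    hq.continuousOn_mul (continuous_pow n).continuousOn
  have hsubq1 : Set.uIcc (0:ℝ) r ⊆ Set.uIcc 0 zp := by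
    rw [Set.uIcc_of_le hr0.le, Set.uIcc_of_le hzp.le]
    exact Set.Icc_subset_Icc le_rfl hrzp.le
  have hsubq2 : Set.uIcc r zp ⊆ Set.uIcc 0 zp := by
    rw [Set.uIcc_of_le hrzp.le, Set.uIcc_of_le hzp.le]
    exact Set.Icc_subset_Icc hr0.le le_rfl
  have hsplit := integral_add_adjacent_intervals (hfg zm r hsub1) (hfg r zp hsub2)
  have hsplitq := integral_add_adjacent_intervals (hqn.mono_set hsubq1) (hqn.mono_set hsubq2)
  -- tail of q integral
  have htail : (∫ ξ in (0:ℝ)..r, ξ ^ n * (zp - ξ) ^ (-α))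
      ≤ r ^ n * (∫ ξ in (0:ℝ)..zp, (zp - ξ) ^ (-α)) := by
    have step1 : (∫ ξ in (0:ℝ)..r, ξ ^ n * (zp - ξ) ^ (-α))
        ≤ ∫ ξ in (0:ℝ)..r, r ^ n * (zp - ξ) ^ (-α) := by
      apply integral_mono_on hr0.le (hqn.mono_set hsubq1) ((hq.mono_set hsubq1).const_mul _)
      intro x hx
      exact mul_le_mul_of_nonneg_right (pow_le_pow_left₀ hx.1 hx.2 n)
        (Real.rpow_nonneg (by linarith [hx.2, hrzp]) _)
    rw [intervalIntegral.integral_const_mul] at step1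
    refine step1.trans (mul_le_mul_of_nonneg_left ?_ (by positivity))
    apply integral_mono_interval le_rfl hr0.le hrzp.le ?_ hq
    apply ae_restrict_of_forall_mem measurableSet_Ioc
    intro x hx
    exact Real.rpow_nonneg (by linarith [hx.2]) _
  -- S1 nonneg
  have hS1nn : 0 ≤ ∫ ξ in zm..r, ξ ^ n * ((ξ - zm) ^ (α - 1) * (zp - ξ) ^ (-α)) := by
    apply intervalIntegral.integral_nonneg hrzm.le
    intro x hx
    exact mul_nonneg (pow_nonneg (by linarith [hx.1]) n)
      (mul_nonneg (Real.rpow_nonneg (by linarith [hx.1]) _)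
        (Real.rpow_nonneg (by linarith [hx.2, hrzp]) _))
  -- S2 lower
  have hS2 : (zp - zm) ^ (α - 1) * (∫ ξ in r..zp, ξ ^ n * (zp - ξ) ^ (-α))
      ≤ ∫ ξ in r..zp, ξ ^ n * ((ξ - zm) ^ (α - 1) * (zp - ξ) ^ (-α)) := by
    rw [← intervalIntegral.integral_const_mul]
    apply integral_mono_on hrzp.le ((hqn.mono_set hsubq2).const_mul _) (hfg r zp hsub2)
    intro x hx
    have h1 : (zp - zm) ^ (α - 1) ≤ (x - zm) ^ (α - 1) := by
      apply Real.rpow_le_rpow_of_nonpos (by linarith [hx.1]) (by linarith [hx.2]) (by linarith)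
    calc (zp - zm) ^ (α - 1) * (x ^ n * (zp - x) ^ (-α))
        ≤ (x - zm) ^ (α - 1) * (x ^ n * (zp - x) ^ (-α)) :=
          mul_le_mul_of_nonneg_right h1
            (mul_nonneg (pow_nonneg (by linarith [hx.1]) n)
              (Real.rpow_nonneg (by linarith [hx.2]) _))
      _ = x ^ n * ((x - zm) ^ (α - 1) * (zp - x) ^ (-α)) := by ring
  have hJsplit : zp ^ ((n:ℝ) + 1 - α) * Bfun α n - r ^ n * (∫ ξ in (0:ℝ)..zp, (zp - ξ) ^ (-α))
      ≤ ∫ ξ in r..zp, ξ ^ n * (zp - ξ) ^ (-α) := by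
    rw [← J_eq hzp n]
    linarith [hsplitq, htail]
  have hcnn : (0:ℝ) ≤ (zp - zm) ^ (α - 1) := Real.rpow_nonneg (by linarith) _
  have := mul_le_mul_of_nonneg_left hJsplit hcnn
  linarith [hsplit, hS1nn, hS2, this]

end Bounds

/-- Laplace-type asymptotics: H_n ~ n^(α−1) z₊^(n+1−α) (z₊ − z₋)^(α−1)/Γ(α) as n → ∞,
for fixed 0 < z₋ < z₊ and 0 < α < 1. -/
theorem H_asymptotics (zm zp α : ℝ) (hzm : 0 < zm) (hzz : zm < zp)
    (hα0 : 0 < α) (hα1 : α < 1) :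
    Filter.Tendsto
      (fun n : ℕ =>
        ((Real.sin (α * π) / π) * ∫ ξ in zm..zp, ξ^n * (ξ - zm) ^ (α - 1) * (zp - ξ) ^ (-α))
          / ((n:ℝ) ^ (α - 1) * zp ^ ((n:ℝ) + 1 - α) * (zp - zm) ^ (α - 1) / Real.Gamma α))
      Filter.atTop (nhds 1) := by
  have hzp : 0 < zp := hzm.trans hzz
  have hc : 0 < zp - zm := by linarith
  have hπ : (0:ℝ) < π := Real.pi_pos
  have hsin : 0 < Real.sin (α * π) :=
    Real.sin_pos_of_pos_of_lt_pi (by positivity) (by nlinarith)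
  have hΓα : 0 < Real.Gamma α := Real.Gamma_pos_of_pos hα0
  have hΓ1α : 0 < Real.Gamma (1 - α) := Real.Gamma_pos_of_pos (by linarith)
  have hcpos : 0 < (zp - zm) ^ (α - 1) := Real.rpow_pos_of_pos hc _
  have hJpos : ∀ n : ℕ, 0 < zp ^ ((n:ℝ) + 1 - α) * Bfun α n :=
    fun n => mul_pos (Real.rpow_pos_of_pos hzp _) (Bfun_pos hα1 n)
  -- Part A : localized integral ratio tends to 1
  have hA : Tendsto (fun n : ℕ =>
      (∫ ξ in zm..zp, ξ ^ n * ((ξ - zm) ^ (α - 1) * (zp - ξ) ^ (-α)))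
        / ((zp - zm) ^ (α - 1) * (zp ^ ((n:ℝ) + 1 - α) * Bfun α n))) atTop (𝓝 1) := by
    rw [Metric.tendsto_atTop]
    intro ε hε
    -- choose δ
    obtain ⟨δ, hδ0, hδc, hK⟩ : ∃ δ : ℝ, 0 < δ ∧ δ < zp - zm ∧
        (zp - zm - δ) ^ (α - 1) / (zp - zm) ^ (α - 1) < 1 + ε / 2 := by
      have hcont : ContinuousAt
          (fun δ : ℝ => (zp - zm - δ) ^ (α - 1) / (zp - zm) ^ (α - 1)) 0 := by
        apply ContinuousAt.div_const
        exact ContinuousAt.rpow_const (by fun_prop) (Or.inl (by simpa using ne_of_gt hc))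
      have htd : Tendsto (fun δ : ℝ => (zp - zm - δ) ^ (α - 1) / (zp - zm) ^ (α - 1))
          (𝓝[>] (0:ℝ)) (𝓝 1) := by
        have h1 := hcont.tendsto.mono_left (nhdsWithin_le_nhds (s := Set.Ioi (0:ℝ)))
        simpa [div_self (ne_of_gt hcpos)] using h1
      have e1 := htd.eventually_lt_const (by linarith : (1:ℝ) < 1 + ε / 2)
      have e2 : ∀ᶠ δ in 𝓝[>] (0:ℝ), δ < zp - zm :=
        eventually_nhdsWithin_of_eventually_nhds (eventually_lt_nhds hc)
      have e3 : ∀ᶠ δ in 𝓝[>] (0:ℝ), (0:ℝ) < δ := eventually_mem_nhdsWithin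
      exact ((e3.and (e2.and e1)).exists).imp (fun δ h => ⟨h.1, h.2.1, h.2.2⟩)
    have hr0 : 0 < zp - δ := by linarith
    have hrzp : zp - δ < zp := by linarith
    have hT := rn_div_J hzp hα0 hα1 hr0 hrzp
    set C := ∫ ξ in zm..zp, (ξ - zm) ^ (α - 1) * (zp - ξ) ^ (-α) with hCdef
    set E := ∫ ξ in (0:ℝ)..zp, (zp - ξ) ^ (-α) with hEdef
    have hUlim : Tendsto (fun n : ℕ =>
        ((zp - δ) ^ n / (zp ^ ((n:ℝ) + 1 - α) * Bfun α n)) * (C / (zp - zm) ^ (α - 1))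
          + (zp - zm - δ) ^ (α - 1) / (zp - zm) ^ (α - 1)) atTop
        (𝓝 ((zp - zm - δ) ^ (α - 1) / (zp - zm) ^ (α - 1))) := by
      have := (hT.mul_const (C / (zp - zm) ^ (α - 1))).add_const
        ((zp - zm - δ) ^ (α - 1) / (zp - zm) ^ (α - 1))
      simpa using this
    have hLlim : Tendsto (fun n : ℕ =>
        1 - ((zp - δ) ^ n / (zp ^ ((n:ℝ) + 1 - α) * Bfun α n)) * E) atTop (𝓝 1) := by
      have := (tendsto_const_nhds (x := (1:ℝ))).sub (hT.mul_const E)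
      simpa using this
    have hUe := hUlim.eventually_lt_const (by linarith : (zp - zm - δ) ^ (α - 1) / (zp - zm) ^ (α - 1) < 1 + ε)
    have hLe := hLlim.eventually_const_lt (by linarith : 1 - ε < (1:ℝ))
    have hbound : ∀ n : ℕ,
        1 - ((zp - δ) ^ n / (zp ^ ((n:ℝ) + 1 - α) * Bfun α n)) * E
          ≤ (∫ ξ in zm..zp, ξ ^ n * ((ξ - zm) ^ (α - 1) * (zp - ξ) ^ (-α)))
            / ((zp - zm) ^ (α - 1) * (zp ^ ((n:ℝ) + 1 - α) * Bfun α n)) ∧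
        (∫ ξ in zm..zp, ξ ^ n * ((ξ - zm) ^ (α - 1) * (zp - ξ) ^ (-α)))
            / ((zp - zm) ^ (α - 1) * (zp ^ ((n:ℝ) + 1 - α) * Bfun α n))
          ≤ ((zp - δ) ^ n / (zp ^ ((n:ℝ) + 1 - α) * Bfun α n)) * (C / (zp - zm) ^ (α - 1))
            + (zp - zm - δ) ^ (α - 1) / (zp - zm) ^ (α - 1) := by
      intro n
      have hJp := hJpos n
      have up := I_upper hzm hzz hα0 hα1 hδ0 hδc n
      have low := I_lower hzm hzz hα0 hα1 hδ0 hδc n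
      rw [← hCdef] at up
      rw [← hEdef] at low
      constructor
      · rw [le_div_iff₀ (by positivity)]
        calc (1 - ((zp - δ) ^ n / (zp ^ ((n:ℝ) + 1 - α) * Bfun α n)) * E)
              * ((zp - zm) ^ (α - 1) * (zp ^ ((n:ℝ) + 1 - α) * Bfun α n))
            = (zp - zm) ^ (α - 1)
              * (zp ^ ((n:ℝ) + 1 - α) * Bfun α n - (zp - δ) ^ n * E) := by
              have hBn := (Bfun_pos hα1 n).ne'
              field_simp
          _ ≤ _ := low
      · rw [div_le_iff₀ (by positivity)]
        calc (∫ ξ in zm..zp, ξ ^ n * ((ξ - zm) ^ (α - 1) * (zp - ξ) ^ (-α)))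
            ≤ (zp - δ) ^ n * C + (zp - zm - δ) ^ (α - 1)
              * (zp ^ ((n:ℝ) + 1 - α) * Bfun α n) := up
          _ = (((zp - δ) ^ n / (zp ^ ((n:ℝ) + 1 - α) * Bfun α n)) * (C / (zp - zm) ^ (α - 1))
              + (zp - zm - δ) ^ (α - 1) / (zp - zm) ^ (α - 1))
              * ((zp - zm) ^ (α - 1) * (zp ^ ((n:ℝ) + 1 - α) * Bfun α n)) := by
              have hBn := (Bfun_pos hα1 n).ne'
              field_simp
    have hfin : ∀ᶠ n : ℕ in atTop, dist
        ((∫ ξ in zm..zp, ξ ^ n * ((ξ - zm) ^ (α - 1) * (zp - ξ) ^ (-α)))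
          / ((zp - zm) ^ (α - 1) * (zp ^ ((n:ℝ) + 1 - α) * Bfun α n))) 1 < ε := by
      filter_upwards [hUe, hLe] with n h1 h2
      have hb := hbound n
      rw [Real.dist_eq, abs_sub_lt_iff]
      constructor <;> linarith [hb.1, hb.2]
    exact eventually_atTop.mp hfin
  -- Part B : Gamma-factor ratio tends to 1
  have hP : Tendsto (fun n : ℕ =>
      (Real.sin (α * π) / π) * Real.Gamma α * ((n:ℝ) ^ (1 - α) * Bfun α n)) atTop (𝓝 1) := by
    have h := (Bfun_tendsto hα0 hα1).const_mul ((Real.sin (α * π) / π) * Real.Gamma α)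
    have hval : Real.sin (α * π) / π * Real.Gamma α * Real.Gamma (1 - α) = 1 := by
      have hsin' : Real.sin (π * α) ≠ 0 := by rw [mul_comm π α]; exact ne_of_gt hsin
      rw [mul_assoc, Real.Gamma_mul_Gamma_one_sub, mul_comm α π]
      field_simp
    rw [hval] at h
    exact h
  -- assemble
  have hmul := hA.mul hP
  rw [mul_one] at hmul
  apply hmul.congr'
  filter_upwards [eventually_ge_atTop 1] with n hn
  have hn0 : (0:ℝ) < (n:ℝ) := by exact_mod_cast Nat.lt_of_lt_of_le Nat.zero_lt_one hn
  have hnpow : (0:ℝ) < (n:ℝ) ^ ((1:ℝ) - α) := Real.rpow_pos_of_pos hn0 _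
  have hIassoc : (∫ ξ in zm..zp, ξ ^ n * (ξ - zm) ^ (α - 1) * (zp - ξ) ^ (-α))
      = ∫ ξ in zm..zp, ξ ^ n * ((ξ - zm) ^ (α - 1) * (zp - ξ) ^ (-α)) := by
    apply intervalIntegral.integral_congr
    intro x _
    ring
  have hna : (n:ℝ) ^ (α - 1) = ((n:ℝ) ^ ((1:ℝ) - α))⁻¹ := by
    rw [show α - 1 = -(1 - α) by ring, Real.rpow_neg (Nat.cast_nonneg n)]
  have hzppos : 0 < zp ^ ((n:ℝ) + 1 - α) := Real.rpow_pos_of_pos hzp _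
  have hBp : 0 < Bfun α n := Bfun_pos hα1 n
  rw [hIassoc, hna]
  field_simp
end
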